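/- Let Σ be a signed simple graph and κ a minimal proper coloration of Σ. Then the switching deficiency range of κ (the set of deficiencies def(κ*) over all colorations κ* switching equivalent to κ) equals the full integer interval [0, ⌊χ(Σ)/2⌋]. -/

import Mathlib

/-- A signed simple graph: two edge-disjoint simple graphs on the same vertex set,
the positive edges and the negative edges. -/
structure SignedGraph (V : Type*) where
  pos : SimpleGraph V
  neg : SimpleGraph V
  disjoint : ∀ a b : V, ¬ (pos.Adj a b ∧ neg.Adj a b)

/-- The color set of size `n`: `{±1, …, ±k}` if `n = 2k`, and `{0, ±1, …, ±k}` if `n = 2k+1`. -/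
noncomputable def signedColorSet (n : ℕ) : Finset ℤ :=
  if Even n then (Finset.Icc (-((n / 2 : ℕ) : ℤ)) ((n / 2 : ℕ) : ℤ)).erase 0
  else Finset.Icc (-((n / 2 : ℕ) : ℤ)) ((n / 2 : ℕ) : ℤ)

/-- A proper coloration of a signed graph using the color set of size `n`. -/
def IsProperColoration {V : Type*} (S : SignedGraph V) (n : ℕ) (κ : V → ℤ) : Prop :=
  (∀ v, κ v ∈ signedColorSet n) ∧
  (∀ a b, S.pos.Adj a b → κ a ≠ κ b) ∧
  (∀ a b, S.neg.Adj a b → κ a ≠ -κ b)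

/-- The chromatic number: the least size of a color set admitting a proper coloration. -/
noncomputable def sChromaticNumber {V : Type*} (S : SignedGraph V) : ℕ :=
  sInf {n : ℕ | ∃ κ : V → ℤ, IsProperColoration S n κ}

/-- A minimal coloration: a proper coloration using the color set of size `χ(Σ)`. -/
def IsMinimalColoration {V : Type*} (S : SignedGraph V) (κ : V → ℤ) : Prop :=
  IsProperColoration S (sChromaticNumber S) κ

/-- The deficiency of a coloration: the number of unused colors from the color set of size `n`. -/
noncomputable def sDeficiency {V : Type*} [Fintype V] (n : ℕ) (κ : V → ℤ) : ℕ :=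
  (signedColorSet n \ Finset.image κ Finset.univ).card

/-- Maximum deficiency over minimal colorations. -/
noncomputable def maxDef {V : Type*} [Fintype V] (S : SignedGraph V) : ℕ :=
  sSup {d : ℕ | ∃ κ : V → ℤ, IsMinimalColoration S κ ∧ sDeficiency (sChromaticNumber S) κ = d}

/-- Minimum deficiency over minimal colorations. -/
noncomputable def minDef {V : Type*} [Fintype V] (S : SignedGraph V) : ℕ :=
  sInf {d : ℕ | ∃ κ : V → ℤ, IsMinimalColoration S κ ∧ sDeficiency (sChromaticNumber S) κ = d}

/-- A stable cover of the positive edges: a vertex cover of `E⁺` that is stable in `Σ`. -/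
def IsStableCover {V : Type*} (S : SignedGraph V) (T : Set V) : Prop :=
  (∀ a b, S.pos.Adj a b → a ∈ T ∨ b ∈ T) ∧
  (∀ a ∈ T, ∀ b ∈ T, ¬ S.pos.Adj a b ∧ ¬ S.neg.Adj a b)

/-- An edge `ab` has exactly one endpoint in `A`. -/
def crossing {V : Type*} (A : Set V) (a b : V) : Prop := ¬ ((a ∈ A) ↔ (b ∈ A))

/-- Switching a signed graph at a vertex set `A`: the sign of every edge with exactly one
endpoint in `A` is negated. -/
def SignedGraph.switch {V : Type*} (S : SignedGraph V) (A : Set V) : SignedGraph V where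
  pos :=
    { Adj := fun a b => (S.pos.Adj a b ∧ ¬ crossing A a b) ∨ (S.neg.Adj a b ∧ crossing A a b)
      symm := by
        constructor
        intro a b h
        unfold crossing at *
        rcases h with ⟨h1, h2⟩ | ⟨h1, h2⟩
        · exact Or.inl ⟨S.pos.adj_symm h1, by tauto⟩
        · exact Or.inr ⟨S.neg.adj_symm h1, by tauto⟩
      loopless := by
        constructor
        intro a h
        rcases h with ⟨h1, _⟩ | ⟨_, h2⟩
        · exact S.pos.irrefl h1
        · exact h2 Iff.rfl }
  neg :=
    { Adj := fun a b => (S.neg.Adj a b ∧ ¬ crossing A a b) ∨ (S.pos.Adj a b ∧ crossing A a b)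
      symm := by
        constructor
        intro a b h
        unfold crossing at *
        rcases h with ⟨h1, h2⟩ | ⟨h1, h2⟩
        · exact Or.inl ⟨S.neg.adj_symm h1, by tauto⟩
        · exact Or.inr ⟨S.pos.adj_symm h1, by tauto⟩
      loopless := by
        constructor
        intro a h
        rcases h with ⟨h1, _⟩ | ⟨_, h2⟩
        · exact S.neg.irrefl h1
        · exact h2 Iff.rfl }
  disjoint := by
    intro a b h
    have := S.disjoint a b
    tauto

/-- General proper coloration with an arbitrary color set `C ⊆ ℤ`. -/
def IsProperWith {V : Type*} (S : SignedGraph V) (C : Set ℤ) (κ : V → ℤ) : Prop :=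
  (∀ v, κ v ∈ C) ∧
  (∀ a b, S.pos.Adj a b → κ a ≠ κ b) ∧
  (∀ a b, S.neg.Adj a b → κ a ≠ -κ b)

open Classical in
/-- The coloration switching equivalent to `κ` via `A`: negate the colors on `A`. -/
noncomputable def switchColor {V : Type*} (A : Set V) (κ : V → ℤ) : V → ℤ :=
  fun v => if v ∈ A then -κ v else κ v

/-- The adjacency of the forcing graph `F(Σ)` for the matching `m`:
a directed edge from `x` to `y` whenever `x ȳ` is a negative edge. -/
def ForcingAdj {V : Type*} (S : SignedGraph V) (m : V → V) (x y : V) : Prop :=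
  S.neg.Adj x (m y)

private lemma aux_scs {n : ℕ} {c : ℤ} :
    c ∈ signedColorSet n ↔
      ((n % 2 = 0 → c ≠ 0) ∧ -((n / 2 : ℕ) : ℤ) ≤ c ∧ c ≤ ((n / 2 : ℕ) : ℤ)) := by
  unfold signedColorSet
  by_cases h : Even n
  · rw [if_pos h]
    rw [Nat.even_iff] at h
    simp only [Finset.mem_erase, Finset.mem_Icc, h]
    constructor
    · rintro ⟨h0, h1, h2⟩; exact ⟨fun _ => h0, h1, h2⟩
    · rintro ⟨h0, h1, h2⟩; exact ⟨h0 trivial, h1, h2⟩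
  · rw [if_neg h]
    rw [Nat.even_iff] at h
    simp only [Finset.mem_Icc]
    constructor
    · rintro ⟨h1, h2⟩; exact ⟨fun hh => absurd hh h, h1, h2⟩
    · rintro ⟨_, h1, h2⟩; exact ⟨h1, h2⟩

private lemma aux_neg_proper {V : Type*} {S : SignedGraph V} {n : ℕ} {κ : V → ℤ}
    (h : IsProperColoration S n κ) : IsProperColoration S n (fun v => -κ v) := by
  obtain ⟨hc, hp, hng⟩ := h
  refine ⟨fun v => ?_, fun a b hab => ?_, fun a b hab => ?_⟩
  · have := aux_scs.mp (hc v)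
    show -κ v ∈ signedColorSet n
    rw [aux_scs]; omega
  · have := hp a b hab
    show -κ a ≠ -κ b
    omega
  · have := hng a b hab
    show -κ a ≠ -(-κ b)
    omega

private lemma aux_zero {V : Type*} (S : SignedGraph V) (n : ℕ)
    (hmin : ∀ (m : ℕ) (κ' : V → ℤ), IsProperColoration S m κ' → n ≤ m)
    (κ : V → ℤ) (hκ : IsProperColoration S n κ) (hO : n % 2 = 1) :
    ∃ u, κ u = 0 := by
  by_contra h
  push_neg at h
  obtain ⟨hc, hp, hng⟩ := hκ
  have hprop : IsProperColoration S (n - 1) κ := by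
    refine ⟨fun u => ?_, hp, hng⟩
    have h1 := aux_scs.mp (hc u)
    have h2 := h u
    rw [aux_scs]; omega
  have := hmin _ _ hprop
  omega

private lemma aux_caseB {V : Type*} (S : SignedGraph V) (n : ℕ)
    (hmin : ∀ (m : ℕ) (κ' : V → ℤ), IsProperColoration S m κ' → n ≤ m)
    (κ : V → ℤ) (hκ : IsProperColoration S n κ)
    (i : ℤ) (hi : 1 ≤ i) (hik : i ≤ ((n / 2 : ℕ) : ℤ))
    (v : V) (hv : κ v = i) (huniq : ∀ u, κ u = i ∨ κ u = -i → u = v) : False := by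
  classical
  obtain ⟨hc, hp, hng⟩ := hκ
  have hb : ∀ u, (n % 2 = 0 → κ u ≠ 0) ∧ -((n / 2 : ℕ) : ℤ) ≤ κ u ∧ κ u ≤ ((n / 2 : ℕ) : ℤ) :=
    fun u => aux_scs.mp (hc u)
  have hnI : ∀ u, κ u ≠ -i := by
    intro u h
    have hu := huniq u (Or.inr h)
    subst hu
    omega
  have hn2 : 2 ≤ n := by omega
  by_cases hE : n % 2 = 0
  · -- n even : map colors
    set g : ℤ → ℤ := fun c => if c = i then 0 else if c = -i then 0 else
      if c = ((n / 2 : ℕ) : ℤ) then i else if c = -((n / 2 : ℕ) : ℤ) then -i else c with hg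
    have hprop : IsProperColoration S (n - 1) (fun u => g (κ u)) := by
      refine ⟨fun u => ?_, fun a b hab => ?_, fun a b hab => ?_⟩
      · have h1 := hb u
        have h2 := hnI u
        show g (κ u) ∈ signedColorSet (n - 1)
        rw [aux_scs]
        simp only [hg]
        split_ifs <;> omega
      · have h1 := hp a b hab
        have h2 : ¬(κ a = i ∧ κ b = i) := by
          rintro ⟨x, y⟩
          exact hab.ne (by rw [huniq a (Or.inl x), huniq b (Or.inl y)])
        have h3 := hb a; have h4 := hb b; have h5 := hnI a; have h6 := hnI b
        show g (κ a) ≠ g (κ b)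
        simp only [hg]
        split_ifs <;> omega
      · have h1 := hng a b hab
        have h2 : ¬(κ a = i ∧ κ b = i) := by
          rintro ⟨x, y⟩
          exact hab.ne (by rw [huniq a (Or.inl x), huniq b (Or.inl y)])
        have h3 := hb a; have h4 := hb b; have h5 := hnI a; have h6 := hnI b
        show g (κ a) ≠ -g (κ b)
        simp only [hg]
        split_ifs <;> omega
    have := hmin (n - 1) _ hprop
    omega
  · -- n odd : recolor zero class and v
    have hO : n % 2 = 1 := by omega
    set κ' : V → ℤ := fun u => if u = v then i else if κ u = 0 then
        (if S.pos.Adj u v then -i else i) else κ u with hκ'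
    have hvv : κ' v = i := by simp [hκ']
    have hval : ∀ u, u ≠ v → κ u ≠ 0 → κ' u = κ u := by
      intro u h1 h2; simp only [hκ']; rw [if_neg h1, if_neg h2]
    have hzp : ∀ u, u ≠ v → κ u = 0 → S.pos.Adj u v → κ' u = -i := by
      intro u h1 h2 h3; simp only [hκ']; rw [if_neg h1, if_pos h2, if_pos h3]
    have hzn : ∀ u, u ≠ v → κ u = 0 → ¬S.pos.Adj u v → κ' u = i := by
      intro u h1 h2 h3; simp only [hκ']; rw [if_neg h1, if_pos h2, if_neg h3]
    have hnoti : ∀ u, u ≠ v → κ u ≠ i ∧ κ u ≠ -i := by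
      intro u h1
      exact ⟨fun h => h1 (huniq u (Or.inl h)), hnI u⟩
    have hprop : IsProperColoration S (n - 1) κ' := by
      refine ⟨fun x => ?_, fun a b hab => ?_, fun a b hab => ?_⟩
      · have h1 := hb x
        rw [aux_scs]
        by_cases e1 : x = v
        · rw [e1, hvv]; omega
        · by_cases e2 : κ x = 0
          · by_cases e3 : S.pos.Adj x v
            · rw [hzp x e1 e2 e3]; omega
            · rw [hzn x e1 e2 e3]; omega
          · rw [hval x e1 e2]; omega
      · -- positive edges
        have h1 := hp a b hab
        have hne := hab.ne
        by_cases ea : a = v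
        · subst ea
          by_cases e2 : κ b = 0
          · rw [hvv, hzp b hne.symm e2 (S.pos.adj_symm hab)]; omega
          · have h4 := hnoti b hne.symm
            rw [hvv, hval b hne.symm e2]; omega
        · by_cases eb : b = v
          · subst eb
            by_cases e2 : κ a = 0
            · rw [hvv, hzp a ea e2 hab]; omega
            · have h4 := hnoti a ea
              rw [hvv, hval a ea e2]; omega
          · by_cases e2 : κ a = 0 <;> by_cases e3 : κ b = 0
            · omega
            · have h4 := hnoti b eb
              have h5 : κ' a = -i ∨ κ' a = i := by
                by_cases e4 : S.pos.Adj a v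
                · exact Or.inl (hzp a ea e2 e4)
                · exact Or.inr (hzn a ea e2 e4)
              rw [hval b eb e3]; omega
            · have h4 := hnoti a ea
              have h5 : κ' b = -i ∨ κ' b = i := by
                by_cases e4 : S.pos.Adj b v
                · exact Or.inl (hzp b eb e3 e4)
                · exact Or.inr (hzn b eb e3 e4)
              rw [hval a ea e2]; omega
            · rw [hval a ea e2, hval b eb e3]; omega
      · -- negative edges
        have h1 := hng a b hab
        have hne := hab.ne
        by_cases ea : a = v
        · subst ea
          by_cases e2 : κ b = 0
          · have e4 : ¬ S.pos.Adj b a := fun hpp => S.disjoint b a ⟨hpp, S.neg.adj_symm hab⟩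
            rw [hvv, hzn b hne.symm e2 e4]; omega
          · have h4 := hnoti b hne.symm
            rw [hvv, hval b hne.symm e2]; omega
        · by_cases eb : b = v
          · subst eb
            by_cases e2 : κ a = 0
            · have e4 : ¬ S.pos.Adj a b := fun hpp => S.disjoint a b ⟨hpp, hab⟩
              rw [hvv, hzn a ea e2 e4]; omega
            · have h4 := hnoti a ea
              rw [hvv, hval a ea e2]; omega
          · by_cases e2 : κ a = 0 <;> by_cases e3 : κ b = 0
            · omega
            · have h4 := hnoti b eb
              have h5 : κ' a = -i ∨ κ' a = i := by
                by_cases e4 : S.pos.Adj a v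
                · exact Or.inl (hzp a ea e2 e4)
                · exact Or.inr (hzn a ea e2 e4)
              rw [hval b eb e3]; omega
            · have h4 := hnoti a ea
              have h5 : κ' b = -i ∨ κ' b = i := by
                by_cases e4 : S.pos.Adj b v
                · exact Or.inl (hzp b eb e3 e4)
                · exact Or.inr (hzn b eb e3 e4)
              rw [hval a ea e2]; omega
            · rw [hval a ea e2, hval b eb e3]; omega
    have := hmin (n - 1) _ hprop
    omega

private lemma aux_class {V : Type*} (S : SignedGraph V) (n : ℕ)
    (hmin : ∀ (m : ℕ) (κ' : V → ℤ), IsProperColoration S m κ' → n ≤ m)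
    (κ : V → ℤ) (hκ : IsProperColoration S n κ)
    (i : ℤ) (hi : 1 ≤ i) (hik : i ≤ ((n / 2 : ℕ) : ℤ)) :
    ∃ u w : V, u ≠ w ∧ (κ u = i ∨ κ u = -i) ∧ (κ w = i ∨ κ w = -i) := by
  classical
  by_contra hcon
  push_neg at hcon
  by_cases hA : ∃ u, κ u = i ∨ κ u = -i
  · obtain ⟨u0, hu0⟩ := hA
    have huniq : ∀ u, κ u = i ∨ κ u = -i → u = u0 := by
      intro u hu
      by_contra hne
      obtain ⟨x, y⟩ := hcon u u0 hne hu
      rcases hu0 with h | h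
      · exact x h
      · exact y h
    rcases hu0 with h | h
    · exact aux_caseB S n hmin κ hκ i hi hik u0 h huniq
    · refine aux_caseB S n hmin (fun u => -κ u) (aux_neg_proper hκ) i hi hik u0 (by simp [h]) ?_
      intro u hu
      apply huniq
      simp only [neg_eq_iff_eq_neg] at hu
      omega
  · push_neg at hA
    obtain ⟨hc, hp, hng⟩ := hκ
    have hb : ∀ u, (n % 2 = 0 → κ u ≠ 0) ∧ -((n / 2 : ℕ) : ℤ) ≤ κ u ∧ κ u ≤ ((n / 2 : ℕ) : ℤ) :=
      fun u => aux_scs.mp (hc u)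
    have hn2 : 2 ≤ n := by omega
    set g : ℤ → ℤ := fun c => if i < c then c - 1 else if c < -i then c + 1 else c with hg
    have hprop : IsProperColoration S (n - 2) (fun u => g (κ u)) := by
      refine ⟨fun u => ?_, fun a b hab => ?_, fun a b hab => ?_⟩
      · have h1 := hb u
        have h2 := hA u
        show g (κ u) ∈ signedColorSet (n - 2)
        rw [aux_scs]
        simp only [hg]
        split_ifs <;> omega
      · have h1 := hp a b hab
        have h3 := hb a; have h4 := hb b; have h5 := hA a; have h6 := hA b
        show g (κ a) ≠ g (κ b)
        simp only [hg]
        split_ifs <;> omega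
      · have h1 := hng a b hab
        have h3 := hb a; have h4 := hb b; have h5 := hA a; have h6 := hA b
        show g (κ a) ≠ -g (κ b)
        simp only [hg]
        split_ifs <;> omega
    have := hmin (n - 2) _ hprop
    omega


/-- The switching deficiency range of a minimal coloration `κ` is the
full integer interval `[0, ⌊χ(Σ)/2⌋]`. -/
theorem switching_deficiency_range {V : Type*} [Fintype V] (S : SignedGraph V)
    (κ : V → ℤ) (hκ : IsMinimalColoration S κ) :
    {d : ℕ | ∃ A : Set V, sDeficiency (sChromaticNumber S) (switchColor A κ) = d} =
      Set.Icc 0 (sChromaticNumber S / 2) := by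
  classical
  have hκn : IsProperColoration S (sChromaticNumber S) κ := hκ
  set n := sChromaticNumber S with hn
  have hmin : ∀ (m : ℕ) (κ' : V → ℤ), IsProperColoration S m κ' → n ≤ m := by
    intro m κ' h
    rw [hn]
    exact Nat.sInf_le ⟨κ', h⟩
  ext d
  simp only [Set.mem_setOf_eq, Set.mem_Icc]
  constructor
  · rintro ⟨A, rfl⟩
    refine ⟨Nat.zero_le _, ?_⟩
    unfold sDeficiency
    have hsub : ∀ c ∈ signedColorSet n \ Finset.image (switchColor A κ) Finset.univ,
        c.natAbs ∈ Finset.Icc 1 (n / 2) := by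
      intro c hcF
      rw [Finset.mem_sdiff] at hcF
      obtain ⟨hc1, hc2⟩ := hcF
      rw [aux_scs] at hc1
      rw [Finset.mem_Icc]
      have hc0 : c ≠ 0 := by
        by_cases hE : n % 2 = 0
        · exact hc1.1 hE
        · obtain ⟨z, hz⟩ := aux_zero S n hmin κ hκn (by omega)
          intro h0
          apply hc2
          rw [Finset.mem_image]
          refine ⟨z, Finset.mem_univ z, ?_⟩
          unfold switchColor
          rw [hz, h0]
          split_ifs <;> ring
      omega
    have hinj : Set.InjOn Int.natAbs
        ↑(signedColorSet n \ Finset.image (switchColor A κ) Finset.univ) := by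
      intro c1 h1 c2 h2 hEq
      by_contra hne
      have h1' := Finset.mem_coe.mp h1
      have h2' := Finset.mem_coe.mp h2
      have hI1 := hsub c1 h1'
      rw [Finset.mem_Icc] at hI1
      have hc12 : c1 = -c2 := by omega
      obtain ⟨u, w, hune, hu, hw⟩ := aux_class S n hmin κ hκn ((c1.natAbs : ℕ) : ℤ)
        (by omega) (by omega)
      have hsw : switchColor A κ u = κ u ∨ switchColor A κ u = -κ u := by
        unfold switchColor
        split_ifs
        · exact Or.inr rfl
        · exact Or.inl rfl
      have hor : switchColor A κ u = c1 ∨ switchColor A κ u = c2 := by omega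
      have hmem : switchColor A κ u ∈ Finset.image (switchColor A κ) Finset.univ :=
        Finset.mem_image.mpr ⟨u, Finset.mem_univ u, rfl⟩
      rcases hor with h | h
      · exact (Finset.mem_sdiff.mp h1').2 (h ▸ hmem)
      · exact (Finset.mem_sdiff.mp h2').2 (h ▸ hmem)
    calc (signedColorSet n \ Finset.image (switchColor A κ) Finset.univ).card
        ≤ (Finset.Icc 1 (n / 2)).card := Finset.card_le_card_of_injOn _ hsub hinj
      _ = n / 2 := by rw [Nat.card_Icc]; omega
  · rintro ⟨-, hd⟩
    rcases isEmpty_or_nonempty V with hV | hV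
    · have h0 : n = 0 := Nat.le_zero.mp (hmin 0 (fun _ => 0)
        ⟨fun v => (IsEmpty.false v).elim, fun a _ _ => (IsEmpty.false a).elim,
         fun a _ _ => (IsEmpty.false a).elim⟩)
      have hd0 : d = 0 := by omega
      refine ⟨∅, ?_⟩
      rw [hd0]
      unfold sDeficiency
      rw [Finset.card_eq_zero]
      apply Finset.eq_empty_of_forall_notMem
      intro c hcm
      rw [Finset.mem_sdiff, aux_scs, h0] at hcm
      omega
    · inhabit V
      have L1 : ∀ j : ℕ, ∃ u w : V, 1 ≤ j → (j : ℤ) ≤ ((n / 2 : ℕ) : ℤ) →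
          (u ≠ w ∧ (κ u = (j : ℤ) ∨ κ u = -(j : ℤ)) ∧ (κ w = (j : ℤ) ∨ κ w = -(j : ℤ))) := by
        intro j
        by_cases hj : 1 ≤ j ∧ (j : ℤ) ≤ ((n / 2 : ℕ) : ℤ)
        · obtain ⟨u, w, h⟩ := aux_class S n hmin κ hκn (j : ℤ) (by exact_mod_cast hj.1) hj.2
          exact ⟨u, w, fun _ _ => h⟩
        · exact ⟨default, default, fun h1 h2 => absurd ⟨h1, h2⟩ hj⟩
      choose u w hL using L1
      set κ₂ : V → ℤ := fun x => if (d : ℤ) < ((κ x).natAbs : ℤ) ∧ x = w (κ x).natAbs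
          then -(((κ x).natAbs : ℕ) : ℤ) else (((κ x).natAbs : ℕ) : ℤ) with hκ₂
      refine ⟨{x | κ₂ x ≠ κ x}, ?_⟩
      have hswitch : switchColor {x | κ₂ x ≠ κ x} κ = κ₂ := by
        funext x
        unfold switchColor
        simp only [Set.mem_setOf_eq]
        by_cases hx : κ₂ x ≠ κ x
        · rw [if_pos hx]
          have h2 : κ₂ x = (((κ x).natAbs : ℕ) : ℤ) ∨ κ₂ x = -(((κ x).natAbs : ℕ) : ℤ) := by
            simp only [hκ₂]
            split_ifs
            · exact Or.inr rfl
            · exact Or.inl rfl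
          omega
        · rw [if_neg hx]
          exact (not_not.mp hx).symm
      rw [hswitch]
      unfold sDeficiency
      have himg : signedColorSet n \ Finset.image κ₂ Finset.univ
          = Finset.image (fun j : ℤ => -j) (Finset.Icc (1 : ℤ) (d : ℤ)) := by
        ext c
        simp only [Finset.mem_sdiff, Finset.mem_image, Finset.mem_Icc, aux_scs,
          Finset.mem_univ, true_and]
        constructor
        · rintro ⟨⟨hc0, hlb, hub⟩, hcim⟩
          push_neg at hcim
          have hcne0 : c ≠ 0 := by
            by_cases hE : n % 2 = 0
            · exact hc0 hE
            · obtain ⟨z, hz⟩ := aux_zero S n hmin κ hκn (by omega)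
              intro h0
              apply hcim z
              simp only [hκ₂]
              rw [hz, h0]
              norm_num
          have hcneg : c < 0 := by
            by_contra hpos
            push_neg at hpos
            have h1 : 1 ≤ c.natAbs := by omega
            have h2 : ((c.natAbs : ℕ) : ℤ) ≤ ((n / 2 : ℕ) : ℤ) := by omega
            obtain ⟨hune, hu, hw'⟩ := hL c.natAbs h1 h2
            apply hcim (u c.natAbs)
            have hj' : (κ (u c.natAbs)).natAbs = c.natAbs := by omega
            simp only [hκ₂]
            rw [hj', if_neg (fun hh => hune hh.2)]
            omega
          have hge : -(d : ℤ) ≤ c := by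
            by_contra hlt
            push_neg at hlt
            have h1 : 1 ≤ c.natAbs := by omega
            have h2 : ((c.natAbs : ℕ) : ℤ) ≤ ((n / 2 : ℕ) : ℤ) := by omega
            obtain ⟨hune, hu, hw'⟩ := hL c.natAbs h1 h2
            apply hcim (w c.natAbs)
            have hj' : (κ (w c.natAbs)).natAbs = c.natAbs := by omega
            simp only [hκ₂]
            rw [hj', if_pos ⟨by omega, rfl⟩]
            omega
          exact ⟨-c, ⟨by omega, by omega⟩, by omega⟩
        · rintro ⟨j, ⟨hj1, hjd⟩, hjc⟩
          have hdn : (d : ℤ) ≤ ((n / 2 : ℕ) : ℤ) := by omega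
          refine ⟨⟨fun _ => by omega, by omega, by omega⟩, ?_⟩
          rintro ⟨x, hx⟩
          by_cases hxx : (d : ℤ) < ((κ x).natAbs : ℤ) ∧ x = w (κ x).natAbs
          · rw [hκ₂] at hx
            simp only at hx
            rw [if_pos hxx] at hx
            omega
          · rw [hκ₂] at hx
            simp only at hx
            rw [if_neg hxx] at hx
            omega
      rw [himg, Finset.card_image_of_injective _ neg_injective, Int.card_Icc]
      omega
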